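/- arXiv:2505.19323 — 2 statements merged into one kernel-verified Lean document; each statement's English description precedes it below -/
import Mathlib

section
/- Let T ≥ 0, ε > 0, and let φ : (−ε, T+ε) → ℝⁿ be real-analytic, and F ⊆ ℝⁿ a semi-algebraic set. Fix t ∈ [0,T). If for every δ ∈ (0, T−t] there exists τ ∈ (t, t+δ) with φ(τ) ∈ F, then there exists δ₀ > 0 such that φ(τ) ∈ F for all τ ∈ (t, t+δ₀). -/
/-- A set is semi-algebraic if it is a finite union of sets defined by finitely
many polynomial inequalities `p ≥ 0` and strict inequalities `q > 0`. -/
def IsSemialgebraic {n : ℕ} (F : Set (Fin n → ℝ)) : Prop :=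
  ∃ (k : ℕ) (P Q : Fin k → Finset (MvPolynomial (Fin n) ℝ)),
    F = ⋃ i : Fin k,
      ({x | ∀ p ∈ P i, 0 ≤ MvPolynomial.eval x p} ∩
       {x | ∀ q ∈ Q i, 0 < MvPolynomial.eval x q})

/-- An analytic function on an open interval has, just to the right of an
interior point, either identically zero values or a constant strict sign. -/
lemma analytic_sign_trichotomy (g : ℝ → ℝ) (a b t : ℝ) (htab : t ∈ Set.Ioo a b)
    (hg : AnalyticOnNhd ℝ g (Set.Ioo a b)) :
    (∀ᶠ τ in nhdsWithin t (Set.Ioi t), g τ = 0) ∨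
    (∀ᶠ τ in nhdsWithin t (Set.Ioi t), 0 < g τ) ∨
    (∀ᶠ τ in nhdsWithin t (Set.Ioi t), g τ < 0) := by
  rcases (hg t htab).eventually_eq_zero_or_eventually_ne_zero with h0 | hne
  · exact Or.inl (h0.filter_mono nhdsWithin_le_nhds)
  · right
    have hne' : ∀ᶠ τ in nhdsWithin t (Set.Ioi t), g τ ≠ 0 :=
      hne.filter_mono (nhdsWithin_mono t (fun x hx => ne_of_gt hx))
    have hdom : ∀ᶠ τ in nhdsWithin t (Set.Ioi t), τ ∈ Set.Ioo a b :=
      eventually_nhdsWithin_of_eventually_nhds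
        ((isOpen_Ioo.eventually_mem htab))
    obtain ⟨c, hc, hIoo⟩ := ((nhdsGT_basis t).eventually_iff).mp (hne'.and hdom)
    -- on `Ioo t c`, `g` is nonvanishing and the interval lies in the domain
    have hsub : Set.Ioo t c ⊆ Set.Ioo a b := fun x hx => (hIoo hx).2
    have hcont : ContinuousOn g (Set.Ioo t c) := (hg.continuousOn).mono hsub
    have hconst : (∀ τ ∈ Set.Ioo t c, 0 < g τ) ∨ (∀ τ ∈ Set.Ioo t c, g τ < 0) := by
      by_cases hpos : ∀ τ ∈ Set.Ioo t c, 0 < g τ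
      · exact Or.inl hpos
      · push_neg at hpos
        obtain ⟨x, hx, hgx⟩ := hpos
        have hgx' : g x < 0 := lt_of_le_of_ne hgx (hIoo hx).1
        refine Or.inr fun y hy => ?_
        by_contra hgy
        have hgy' : 0 < g y := lt_of_le_of_ne (not_lt.mp hgy) (Ne.symm (hIoo hy).1)
        have huIcc : Set.uIcc x y ⊆ Set.Ioo t c :=
          Set.OrdConnected.uIcc_subset Set.ordConnected_Ioo hx hy
        have : (0 : ℝ) ∈ g '' Set.uIcc x y := by
          apply intermediate_value_uIcc (hcont.mono huIcc)
          rw [Set.mem_uIcc]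
          exact Or.inl ⟨le_of_lt hgx', le_of_lt hgy'⟩
        obtain ⟨z, hz, hgz⟩ := this
        exact (hIoo (huIcc hz)).1 hgz
    rcases hconst with h | h
    · exact Or.inl (((nhdsGT_basis t).eventually_iff).mpr ⟨c, hc, fun x hx => h x hx⟩)
    · exact Or.inr (((nhdsGT_basis t).eventually_iff).mpr ⟨c, hc, fun x hx => h x hx⟩)

/-- From eventual constancy of a predicate's truth value, the predicate is
eventually equivalent to its eventual truth. -/
lemma eventually_iff_eventually {L : Filter ℝ} [L.NeBot] {p : ℝ → Prop}
    (h : (∀ᶠ τ in L, p τ) ∨ (∀ᶠ τ in L, ¬ p τ)) :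
    ∀ᶠ τ in L, (p τ ↔ ∀ᶠ σ in L, p σ) := by
  rcases h with h | h
  · filter_upwards [h] with τ hτ
    simp [hτ, h]
  · have h2 : ¬ ∀ᶠ σ in L, p σ := by
      intro hc
      obtain ⟨x, hx1, hx2⟩ := (hc.and h).exists
      exact hx2 hx1
    filter_upwards [h] with τ hτ
    simp [hτ, h2]

/-- If a real-analytic flow hits a semi-algebraic set arbitrarily soon after
time `t`, then it stays in the set on some right-open interval after `t`. -/
theorem analytic_flow_local_progress
    {n : ℕ} (T ε : ℝ) (hT : 0 ≤ T) (hε : 0 < ε)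
    (φ : ℝ → (Fin n → ℝ))
    (hφ : AnalyticOnNhd ℝ φ (Set.Ioo (-ε) (T + ε)))
    (F : Set (Fin n → ℝ)) (hF : IsSemialgebraic F)
    (t : ℝ) (ht : t ∈ Set.Ico 0 T)
    (hhit : ∀ δ ∈ Set.Ioc 0 (T - t), ∃ τ ∈ Set.Ioo t (t + δ), φ τ ∈ F) :
    ∃ δ₀ > 0, ∀ τ ∈ Set.Ioo t (t + δ₀), φ τ ∈ F := by
  obtain ⟨k, P, Q, hFeq⟩ := hF
  set L := nhdsWithin t (Set.Ioi t) with hL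
  have htmem : t ∈ Set.Ioo (-ε) (T + ε) := ⟨by linarith [ht.1], by linarith [ht.2]⟩
  -- each evaluated polynomial along the flow is analytic
  have hanal : ∀ p : MvPolynomial (Fin n) ℝ,
      AnalyticOnNhd ℝ (fun τ => MvPolynomial.eval (φ τ) p) (Set.Ioo (-ε) (T + ε)) := by
    intro p
    have hcoord : ∀ i : Fin n, AnalyticOnNhd ℝ (fun x => φ x i) (Set.Ioo (-ε) (T + ε)) := by
      intro i x hx
      exact ((ContinuousLinearMap.proj i).analyticAt (φ x)).comp (hφ x hx)
    have h := AnalyticOnNhd.aeval_mvPolynomial (𝕜 := ℝ) (f := φ)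
      (s := Set.Ioo (-ε) (T + ε)) hcoord p
    have heq : ∀ (x : Fin n → ℝ),
        (MvPolynomial.aeval x p : ℝ) = MvPolynomial.eval x p := fun x =>
      DFunLike.congr_fun (MvPolynomial.coe_aeval_eq_eval (f := x)) p
    simpa only [heq] using h
  -- each polynomial inequality has eventually constant truth value to the right of t
  have key : ∀ p : MvPolynomial (Fin n) ℝ,
      ((∀ᶠ τ in L, 0 ≤ MvPolynomial.eval (φ τ) p) ∨
        (∀ᶠ τ in L, ¬ 0 ≤ MvPolynomial.eval (φ τ) p)) ∧
      ((∀ᶠ τ in L, 0 < MvPolynomial.eval (φ τ) p) ∨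
        (∀ᶠ τ in L, ¬ 0 < MvPolynomial.eval (φ τ) p)) := by
    intro p
    rcases analytic_sign_trichotomy _ _ _ _ htmem (hanal p) with h | h | h
    · exact ⟨Or.inl (h.mono fun τ hτ => by simp [hτ]),
        Or.inr (h.mono fun τ hτ => by simp [hτ])⟩
    · exact ⟨Or.inl (h.mono fun τ hτ => le_of_lt hτ),
        Or.inl h⟩
    · exact ⟨Or.inr (h.mono fun τ hτ => not_le.mpr hτ),
        Or.inr (h.mono fun τ hτ => not_lt.mpr (le_of_lt hτ))⟩
  have hNeBot : L.NeBot := by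
    rw [hL]; infer_instance
  -- eventually, each inequality's truth equals its eventual truth
  have big : ∀ᶠ τ in L, ∀ i : Fin k,
      (∀ p ∈ P i, (0 ≤ MvPolynomial.eval (φ τ) p ↔
        ∀ᶠ σ in L, 0 ≤ MvPolynomial.eval (φ σ) p)) ∧
      (∀ q ∈ Q i, (0 < MvPolynomial.eval (φ τ) q ↔
        ∀ᶠ σ in L, 0 < MvPolynomial.eval (φ σ) q)) := by
    rw [Filter.eventually_all]
    intro i
    rw [Filter.eventually_and]
    constructor
    · rw [Filter.eventually_all_finset]
      intro p _
      exact eventually_iff_eventually (key p).1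
    · rw [Filter.eventually_all_finset]
      intro q _
      exact eventually_iff_eventually (key q).2
  -- the flow hits F frequently just after t
  have freq : ∃ᶠ τ in L, φ τ ∈ F := by
    rw [(nhdsGT_basis t).frequently_iff]
    intro b hb
    have hδ : min (b - t) (T - t) ∈ Set.Ioc 0 (T - t) :=
      ⟨lt_min (by linarith) (by linarith [ht.2]), min_le_right _ _⟩
    obtain ⟨τ, hτ, hτF⟩ := hhit _ hδ
    exact ⟨τ, ⟨hτ.1, lt_of_lt_of_le hτ.2 (by
      have := min_le_left (b - t) (T - t); linarith)⟩, hτF⟩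
  obtain ⟨τ₀, hτ₀F, hτ₀big⟩ := (freq.and_eventually big).exists
  -- extract the witness cell
  rw [hFeq, Set.mem_iUnion] at hτ₀F
  obtain ⟨i, hi1, hi2⟩ := hτ₀F
  have hP : ∀ p ∈ P i, ∀ᶠ σ in L, 0 ≤ MvPolynomial.eval (φ σ) p :=
    fun p hp => ((hτ₀big i).1 p hp).mp (hi1 p hp)
  have hQ : ∀ q ∈ Q i, ∀ᶠ σ in L, 0 < MvPolynomial.eval (φ σ) q :=
    fun q hq => ((hτ₀big i).2 q hq).mp (hi2 q hq)
  have hev : ∀ᶠ σ in L, φ σ ∈ F := by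
    have h1 : ∀ᶠ σ in L, ∀ p ∈ P i, 0 ≤ MvPolynomial.eval (φ σ) p :=
      Filter.eventually_all_finset _ |>.mpr hP
    have h2 : ∀ᶠ σ in L, ∀ q ∈ Q i, 0 < MvPolynomial.eval (φ σ) q :=
      Filter.eventually_all_finset _ |>.mpr hQ
    filter_upwards [h1, h2] with σ hσ1 hσ2
    rw [hFeq, Set.mem_iUnion]
    exact ⟨i, hσ1, hσ2⟩
  obtain ⟨c, hc, hIoo⟩ := ((nhdsGT_basis t).eventually_iff).mp hev
  refine ⟨c - t, by linarith, fun τ hτ => hIoo ?_⟩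
  constructor
  · exact hτ.1
  · have := hτ.2; linarith
end

section
/- Let g : ℝ × ℝᵐ → ℝᵐ be real-analytic and let x : (−ε, T+ε) → ℝⁿ be real-analytic. Suppose y : [0, T_y) → ℝᵐ is the right-maximal solution of y'(t) = g(t, y(t)), y(0) = y₀, with T_y ≤ T, and suppose there is a continuous function h : [0,T] → ℝ with ‖y(t)‖² ≤ h(t) for all t ∈ [0, T_y). Then T_y = T, i.e., the solution extends to all of [0,T]. -/
open Set Metric

/-- Picard–Lindelöf with the extra information that the solution stays in the
closed ball `closedBall x₀ R`. -/
theorem my_pl_exists {E : Type*} [NormedAddCommGroup E] [NormedSpace ℝ E] [CompleteSpace E]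
    {v : ℝ → E → E} {tMin tMax : ℝ} {t₀ : Set.Icc tMin tMax} (x₀ : E) {R L K : NNReal}
    (hpl : IsPicardLindelof v t₀ x₀ R 0 L K) :
    ∃ f : ℝ → E, f t₀ = x₀ ∧ (∀ t ∈ Set.Icc tMin tMax, f t ∈ Metric.closedBall x₀ R) ∧
      ∀ t ∈ Set.Icc tMin tMax, HasDerivWithinAt f (v t (f t)) (Set.Icc tMin tMax) t := by
  have hx : x₀ ∈ Metric.closedBall x₀ ((0 : NNReal) : ℝ) := Metric.mem_closedBall_self le_rfl
  obtain ⟨α, hα⟩ := ODE.FunSpace.exists_isFixedPt_next hpl hx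
  refine ⟨α.compProj, by rw [ODE.FunSpace.compProj_val, ← hα, ODE.FunSpace.next_apply₀],
    fun t _ => α.compProj_mem_closedBall hpl.mul_max_le, fun t ht => ?_⟩
  apply ODE.hasDerivWithinAt_picard_Icc t₀.2 hpl.continuousOn_uncurry
    α.continuous_compProj.continuousOn (fun _ _ => α.compProj_mem_closedBall hpl.mul_max_le)
    x₀ ht |>.congr_of_mem _ ht
  intro t' ht'
  nth_rw 1 [← hα]
  rw [ODE.FunSpace.compProj_of_mem ht', ODE.FunSpace.next_apply]

/-- Bounded Differential Ghost soundness core: a right-maximal solution of an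
ODE with real-analytic right-hand side whose squared Euclidean norm is bounded
by a continuous function on `[0,T]` exists on the whole interval `[0,T]`. -/
theorem bounded_ghost_no_blowup
    {m : ℕ} (T Ty : ℝ) (hTy : 0 < Ty) (hle : Ty ≤ T)
    (g : ℝ × EuclideanSpace ℝ (Fin m) → EuclideanSpace ℝ (Fin m))
    (hg : AnalyticOnNhd ℝ g Set.univ)
    (y : ℝ → EuclideanSpace ℝ (Fin m)) (y₀ : EuclideanSpace ℝ (Fin m))
    (hy0 : y 0 = y₀)
    (hode : ∀ t ∈ Set.Ico 0 Ty, HasDerivAt y (g (t, y t)) t)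
    (hmax : ∀ T' : ℝ, Ty < T' → T' ≤ T →
      ¬ ∃ z : ℝ → EuclideanSpace ℝ (Fin m),
          (∀ t ∈ Set.Ico 0 T', HasDerivAt z (g (t, z t)) t) ∧
          (∀ t ∈ Set.Ico 0 Ty, z t = y t))
    (h : ℝ → ℝ) (hh : ContinuousOn h (Set.Icc 0 T))
    (hbound : ∀ t ∈ Set.Ico 0 Ty, ‖y t‖ ^ 2 ≤ h t) :
    Ty = T := by
  by_contra hne
  have hlt : Ty < T := lt_of_le_of_ne hle hne
  have hT0 : (0:ℝ) ≤ T := hTy.le.trans hle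
  have hgc : Continuous g := by
    rw [← continuousOn_univ]; exact hg.continuousOn
  have hgd : ContDiff ℝ 1 g := hg.contDiff
  -- a uniform bound on the norm of the solution
  obtain ⟨M, hM⟩ := isCompact_Icc.bddAbove_image hh
  set r : ℝ := Real.sqrt (max M 0) with hr_def
  have hr0 : 0 ≤ r := Real.sqrt_nonneg _
  have hyr : ∀ t ∈ Set.Ico 0 Ty, ‖y t‖ ≤ r := by
    intro t ht
    have h1 : h t ≤ M := hM (Set.mem_image_of_mem h ⟨ht.1, ht.2.le.trans hle⟩)
    have h2 : ‖y t‖ ^ 2 ≤ max M 0 := (hbound t ht).trans (h1.trans (le_max_left _ _))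
    calc ‖y t‖ = Real.sqrt (‖y t‖ ^ 2) := (Real.sqrt_sq (norm_nonneg _)).symm
      _ ≤ r := Real.sqrt_le_sqrt h2
  -- bounds for g and its derivative on a compact region
  have hK : IsCompact ((Set.Icc (0:ℝ) (T+1)) ×ˢ
      Metric.closedBall (0 : EuclideanSpace ℝ (Fin m)) (r+1)) :=
    isCompact_Icc.prod (isCompact_closedBall _ _)
  obtain ⟨L₀, hL₀⟩ := hK.exists_bound_of_continuousOn
    ((hgd.continuous_fderiv one_ne_zero).continuousOn)
  obtain ⟨C, hC⟩ := hK.exists_bound_of_continuousOn hgc.continuousOn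
  have hC0 : 0 ≤ C := by
    refine (norm_nonneg _).trans (hC ((0:ℝ), (0 : EuclideanSpace ℝ (Fin m))) ?_)
    constructor
    · show (0:ℝ) ∈ Set.Icc 0 (T+1)
      exact ⟨le_rfl, by linarith⟩
    · show (0 : EuclideanSpace ℝ (Fin m)) ∈ Metric.closedBall 0 (r+1)
      exact Metric.mem_closedBall_self (by positivity)
  set Lnn : NNReal := Real.toNNReal L₀ with hLnn
  -- g is Lipschitz in x, uniformly in t, on the region
  have hlip : ∀ t ∈ Set.Icc (0:ℝ) (T+1),
      LipschitzOnWith Lnn (fun x => g (t, x))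
        (Metric.closedBall (0 : EuclideanSpace ℝ (Fin m)) (r+1)) := by
    intro t ht
    apply (convex_closedBall (0 : EuclideanSpace ℝ (Fin m))
        (r+1)).lipschitzOnWith_of_nnnorm_hasFDerivWithin_le
      (f' := fun x => (fderiv ℝ g (t, x)).comp
        (ContinuousLinearMap.inr ℝ ℝ (EuclideanSpace ℝ (Fin m))))
    · intro x hx
      exact ((hgd.differentiable one_ne_zero (t, x)).hasFDerivAt.comp x
        (hasFDerivAt_prodMk_right t x)).hasFDerivWithinAt
    · intro x hx
      rw [← NNReal.coe_le_coe, coe_nnnorm, hLnn, Real.coe_toNNReal']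
      refine le_trans ?_ (le_max_left _ _)
      refine ContinuousLinearMap.opNorm_le_bound _
        ((norm_nonneg _).trans (hL₀ (t, x) ⟨ht, hx⟩)) fun u => ?_
      have h2 : ‖(((0:ℝ)), u)‖ = ‖u‖ := by
        simp [Prod.norm_def]
      calc ‖((fderiv ℝ g (t, x)).comp
            (ContinuousLinearMap.inr ℝ ℝ (EuclideanSpace ℝ (Fin m)))) u‖
          ≤ ‖fderiv ℝ g (t, x)‖ * ‖(((0:ℝ)), u)‖ := (fderiv ℝ g (t, x)).le_opNorm _
        _ ≤ L₀ * ‖u‖ := by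
            rw [h2]
            exact mul_le_mul_of_nonneg_right (hL₀ (t, x) ⟨ht, hx⟩) (norm_nonneg u)
  -- local existence time
  set δ : ℝ := min 1 (1/(C+1)) with hδ_def
  have hδ0 : 0 < δ := lt_min one_pos (by positivity)
  have hδ1 : δ ≤ 1 := min_le_left _ _
  set t₀ : ℝ := max (Ty - δ/2) (Ty/2) with ht₀_def
  have ht₀Ty : t₀ < Ty := max_lt (by linarith) (by linarith)
  have ht₀0 : 0 < t₀ := lt_of_lt_of_le (by linarith : (0:ℝ) < Ty/2) (le_max_right _ _)
  have hTyδ : Ty < t₀ + δ := by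
    have h2 : Ty - δ/2 ≤ t₀ := le_max_left _ _
    linarith
  have hx₀ : ‖y t₀‖ ≤ r := hyr t₀ ⟨ht₀0.le, ht₀Ty⟩
  have hsub_ball : Metric.closedBall (y t₀) 1 ⊆
      Metric.closedBall (0 : EuclideanSpace ℝ (Fin m)) (r+1) := by
    apply Metric.closedBall_subset_closedBall'
    rw [dist_zero_right]
    linarith
  have htsub : Set.Icc t₀ (t₀+δ) ⊆ Set.Icc (0:ℝ) (T+1) := by
    apply Set.Icc_subset_Icc ht₀0.le
    have : t₀ < T := lt_of_lt_of_le ht₀Ty hle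
    linarith
  have hsub_ball' : Metric.closedBall (y t₀) ((1 : NNReal) : ℝ) ⊆
      Metric.closedBall (0 : EuclideanSpace ℝ (Fin m)) (r+1) := by
    rw [NNReal.coe_one]; exact hsub_ball
  have hCnn : ((Real.toNNReal C : NNReal) : ℝ) = C := Real.coe_toNNReal _ hC0
  have hpl : IsPicardLindelof (fun t x => g (t, x))
      (⟨t₀, le_rfl, by linarith⟩ : Set.Icc t₀ (t₀+δ)) (y t₀) 1 0 (Real.toNNReal C) Lnn :=
    { lipschitzOnWith := fun t ht => (hlip t (htsub ht)).mono hsub_ball'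
      continuousOn := fun x _ =>
        (hgc.comp (continuous_id.prodMk continuous_const)).continuousOn
      norm_le := fun t ht x hx => (hC (t, x) ⟨htsub ht, hsub_ball' hx⟩).trans (Real.le_coe_toNNReal C)
      mul_max_le := by
        simp only [hCnn, NNReal.coe_one, NNReal.coe_zero, sub_zero, tsub_zero,
          add_sub_cancel_left, sub_self, max_eq_left hδ0.le]
        calc C * δ ≤ C * (1/(C+1)) :=
              mul_le_mul_of_nonneg_left (min_le_right _ _) hC0
          _ = C / (C+1) := by ring
          _ ≤ 1 := by
              rw [div_le_one (by positivity)]; linarith }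
  obtain ⟨w, hw0, hwmem, hwderiv⟩ := my_pl_exists (y t₀) hpl
  -- w agrees with y on [t₀, Ty)
  set S : ℝ → Set (EuclideanSpace ℝ (Fin m)) := fun t =>
    if t ∈ Set.Icc (0:ℝ) (T+1) then
      Metric.closedBall (0 : EuclideanSpace ℝ (Fin m)) (r+1) else ∅ with hS
  have hSlip : ∀ t, LipschitzOnWith Lnn (fun x => g (t, x)) (S t) := by
    intro t
    by_cases htmem : t ∈ Set.Icc (0:ℝ) (T+1)
    · rw [hS]; simp only [if_pos htmem]; exact hlip t htmem
    · rw [hS]; simp only [if_neg htmem]; exact lipschitzOnWith_empty _ _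
  have weq : ∀ s ∈ Set.Ico t₀ Ty, w s = y s := by
    intro s hs
    have hsδ : s < t₀ + δ := hs.2.trans hTyδ
    have hsI : Set.Icc t₀ s ⊆ Set.Icc t₀ (t₀+δ) := Set.Icc_subset_Icc le_rfl hsδ.le
    have hmemT : ∀ t ∈ Set.Ico t₀ s, t ∈ Set.Icc (0:ℝ) (T+1) := by
      intro t ht
      have h1 : t < Ty := ht.2.trans hs.2
      exact ⟨ht₀0.le.trans ht.1, by linarith⟩
    have hmemTy : ∀ t ∈ Set.Ico t₀ s, t ∈ Set.Ico (0:ℝ) Ty := by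
      intro t ht
      exact ⟨ht₀0.le.trans ht.1, ht.2.trans hs.2⟩
    have hwcont : ContinuousOn w (Set.Icc t₀ s) :=
      fun t ht => ((hwderiv t (hsI ht)).continuousWithinAt).mono hsI
    have hw' : ∀ t ∈ Set.Ico t₀ s,
        HasDerivWithinAt w (g (t, w t)) (Set.Ici t) t := by
      intro t ht
      have htmem : t ∈ Set.Icc t₀ (t₀+δ) := hsI ⟨ht.1, ht.2.le⟩
      refine (hwderiv t htmem).mono_of_mem_nhdsWithin ?_
      rw [mem_nhdsWithin]
      refine ⟨Set.Iio (t₀+δ), isOpen_Iio, ht.2.trans hsδ, fun u hu => ?_⟩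
      exact ⟨ht.1.trans hu.2, hu.1.le⟩
    have hws : ∀ t ∈ Set.Ico t₀ s, w t ∈ S t := by
      intro t ht
      rw [hS]; simp only [if_pos (hmemT t ht)]
      exact hsub_ball (hwmem t (hsI ⟨ht.1, ht.2.le⟩))
    have hycont : ContinuousOn y (Set.Icc t₀ s) := by
      intro t ht
      rcases lt_or_eq_of_le ht.2 with h1 | h1
      · exact (hode t ⟨ht₀0.le.trans ht.1, h1.trans hs.2⟩).continuousAt.continuousWithinAt
      · exact (hode t ⟨ht₀0.le.trans ht.1, h1 ▸ hs.2⟩).continuousAt.continuousWithinAt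
    have hy' : ∀ t ∈ Set.Ico t₀ s,
        HasDerivWithinAt y (g (t, y t)) (Set.Ici t) t :=
      fun t ht => (hode t (hmemTy t ht)).hasDerivWithinAt
    have hys : ∀ t ∈ Set.Ico t₀ s, y t ∈ S t := by
      intro t ht
      rw [hS]; simp only [if_pos (hmemT t ht)]
      rw [mem_closedBall_zero_iff]
      have := hyr t (hmemTy t ht)
      linarith
    have key : Set.EqOn w y (Set.Icc t₀ s) :=
      ODE_solution_unique_of_mem_Icc_right (fun t _ => hSlip t) hwcont hw' hws hycont hy' hys hw0
    exact key ⟨hs.1, le_rfl⟩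
  -- build the extended solution and contradict maximality
  set T' : ℝ := min (t₀ + δ) T with hT'
  have hT'1 : Ty < T' := lt_min hTyδ hlt
  have hT'2 : T' ≤ T := min_le_right _ _
  refine hmax T' hT'1 hT'2 ⟨fun t => if t < Ty then y t else w t, ?_, ?_⟩
  · intro t ht
    by_cases hcase : t < Ty
    · have hdy := hode t ⟨ht.1, hcase⟩
      have heqv : (fun u => if u < Ty then y u else w u) =ᶠ[nhds t] y := by
        filter_upwards [Iio_mem_nhds hcase] with u hu
        exact if_pos hu
      have := hdy.congr_of_eventuallyEq heqv
      simpa [if_pos hcase] using this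
    · push_neg at hcase
      have ht1 : t₀ < t := lt_of_lt_of_le ht₀Ty hcase
      have ht2 : t < t₀ + δ := lt_of_lt_of_le ht.2 (min_le_left _ _)
      have hdw : HasDerivAt w (g (t, w t)) t :=
        (hwderiv t ⟨ht1.le, ht2.le⟩).hasDerivAt (Icc_mem_nhds ht1 ht2)
      have heqv : (fun u => if u < Ty then y u else w u) =ᶠ[nhds t] w := by
        filter_upwards [Ioo_mem_nhds ht1 ht2] with u hu
        by_cases hu' : u < Ty
        · rw [if_pos hu', ← weq u ⟨hu.1.le, hu'⟩]
        · rw [if_neg hu']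
      have := hdw.congr_of_eventuallyEq heqv
      simpa [if_neg (not_lt.mpr hcase)] using this
  · intro t ht
    exact if_pos ht.2
end
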